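/- For α > β > 0, a, b > 0 and p sufficiently large, the Laplace transform of t ↦ ∑_{r=0}^∞ (−a)^r t^((α−β)r) E^{r+1}_{α,(α−β)r+1}(−b t^α) at p equals p^(α−1)/(p^α + a p^β + b). -/

import Mathlib

open MeasureTheory Real Set

private lemma gamma_lb {M x : ℝ} (hM : 0 < M) (hx : 0 ≤ x) :
    M ^ x * Real.exp (-M) ≤ Real.Gamma (x + 1) := by
  have hx1 : (0:ℝ) < x + 1 := by linarith
  have hint : IntegrableOn (fun u : ℝ => Real.exp (-u) * u ^ x) (Ioi (0:ℝ)) := by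
    simpa using Real.GammaIntegral_convergent hx1
  have hintM : IntegrableOn (fun u : ℝ => Real.exp (-u) * u ^ x) (Ioi M) :=
    hint.mono_set (Ioi_subset_Ioi hM.le)
  have hconst : IntegrableOn (fun u : ℝ => Real.exp (-u) * M ^ x) (Ioi M) := by
    have h : IntegrableOn (fun u : ℝ => Real.exp (-u)) (Ioi M) := by
      simpa using exp_neg_integrableOn_Ioi M one_pos
    exact h.mul_const _
  have h1 : ∫ u in Ioi M, Real.exp (-u) * M ^ x ≤ ∫ u in Ioi M, Real.exp (-u) * u ^ x := by
    refine setIntegral_mono_on hconst hintM measurableSet_Ioi (fun u hu => ?_)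
    exact mul_le_mul_of_nonneg_left (Real.rpow_le_rpow hM.le (le_of_lt hu) hx) (Real.exp_pos _).le
  have h2 : ∫ u in Ioi M, Real.exp (-u) * u ^ x ≤ ∫ u in Ioi (0:ℝ), Real.exp (-u) * u ^ x := by
    refine setIntegral_mono_set hint ?_ ((Ioi_subset_Ioi hM.le).eventuallyLE)
    filter_upwards [ae_restrict_mem measurableSet_Ioi] with u hu
    exact mul_nonneg (Real.exp_pos _).le (Real.rpow_nonneg (le_of_lt hu) _)
  have h3 : ∫ u in Ioi M, Real.exp (-u) * M ^ x = M ^ x * Real.exp (-M) := by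
    rw [integral_mul_const, integral_exp_neg_Ioi, mul_comm]
  rw [Real.Gamma_eq_integral hx1]
  simp only [add_sub_cancel_right]
  linarith

private lemma laplace_val {e p : ℝ} (he : 0 ≤ e) (hp : 0 < p) :
    ∫ t in Ioi (0:ℝ), Real.exp (-p * t) * t ^ e
      = Real.Gamma (e + 1) * (1/p) ^ (e + 1) := by
  calc ∫ t in Ioi (0:ℝ), Real.exp (-p * t) * t ^ e
      = ∫ t in Ioi (0:ℝ), t ^ (e + 1 - 1) * Real.exp (-(p * t)) := by
        refine setIntegral_congr_fun measurableSet_Ioi (fun t ht => ?_)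
        rw [add_sub_cancel_right, neg_mul, mul_comm]
    _ = (1/p) ^ (e + 1) * Real.Gamma (e + 1) :=
        integral_rpow_mul_exp_neg_mul_Ioi (by linarith) hp
    _ = Real.Gamma (e + 1) * (1/p) ^ (e + 1) := mul_comm _ _

private lemma laplace_integrable {e p : ℝ} (he : 0 ≤ e) (hp : 0 < p) :
    IntegrableOn (fun t : ℝ => Real.exp (-p * t) * t ^ e) (Ioi (0:ℝ)) := by
  have h := integrableOn_rpow_mul_exp_neg_mul_rpow (show (-1:ℝ) < e by linarith) one_pos hp
  refine h.congr_fun (fun t ht => ?_) measurableSet_Ioi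
  simp only [Real.rpow_one]
  rw [mul_comm]

private lemma chooseR_le (r k : ℕ) : (((r + k).choose k : ℕ) : ℝ) ≤ 2 ^ r * 2 ^ k := by
  have h : (r + k).choose k ≤ 2 ^ (r + k) := by
    calc (r + k).choose k ≤ ∑ m ∈ Finset.range (r + k + 1), (r + k).choose m :=
          Finset.single_le_sum (fun i _ => Nat.zero_le _)
            (Finset.mem_range.mpr (by omega))
      _ = 2 ^ (r + k) := Nat.sum_range_choose _
  calc (((r + k).choose k : ℕ) : ℝ) ≤ ((2 ^ (r + k) : ℕ) : ℝ) := by exact_mod_cast h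
    _ = 2 ^ r * 2 ^ k := by push_cast [pow_add]; ring

private lemma summable_aux {x y : ℝ} (hx : 0 ≤ x) (hx2 : 2 * x < 1) (hy : 0 ≤ y)
    (hy2 : 2 * y < 1) :
    Summable (fun q : ℕ × ℕ => (((q.1 + q.2).choose q.2 : ℕ) : ℝ) * x ^ q.1 * y ^ q.2) := by
  have s1 : Summable (fun r : ℕ => (2 * x) ^ r) :=
    summable_geometric_of_lt_one (by linarith) (by linarith)
  have s2 : Summable (fun k : ℕ => (2 * y) ^ k) :=
    summable_geometric_of_lt_one (by linarith) (by linarith)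
  have hs : Summable (fun q : ℕ × ℕ => (2 * x) ^ q.1 * (2 * y) ^ q.2) :=
    s1.mul_of_nonneg s2 (fun r => pow_nonneg (by linarith) _) (fun k => pow_nonneg (by linarith) _)
  refine hs.of_nonneg_of_le (fun q => by positivity) (fun q => ?_)
  calc (((q.1 + q.2).choose q.2 : ℕ) : ℝ) * x ^ q.1 * y ^ q.2
      ≤ (2 ^ q.1 * 2 ^ q.2) * x ^ q.1 * y ^ q.2 := by
        have := chooseR_le q.1 q.2
        have h1 : (0:ℝ) ≤ x ^ q.1 := pow_nonneg hx _
        have h2 : (0:ℝ) ≤ y ^ q.2 := pow_nonneg hy _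
        nlinarith [mul_nonneg h1 h2]
    _ = (2 * x) ^ q.1 * (2 * y) ^ q.2 := by rw [mul_pow, mul_pow]; ring

private lemma choose_swap (r k : ℕ) : ((r + k).choose k : ℕ) = (k + r).choose r := by
  rw [Nat.add_comm r k]
  have h := Nat.choose_symm (Nat.le_add_right k r)
  simpa using h.symm

private lemma tsum_eval {x y : ℝ} (hx : 0 ≤ x) (hx2 : 2 * x < 1) (hy : 0 ≤ y)
    (hy2 : 2 * y < 1) :
    ∑' q : ℕ × ℕ, (((q.1 + q.2).choose q.2 : ℕ) : ℝ) * (-x) ^ q.1 * (-y) ^ q.2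
      = 1 / (1 + x + y) := by
  have h1y : (0:ℝ) < 1 + y := by linarith
  have h1xy : (0:ℝ) < 1 + x + y := by linarith
  have hsum : Summable (fun q : ℕ × ℕ =>
      (((q.1 + q.2).choose q.2 : ℕ) : ℝ) * (-x) ^ q.1 * (-y) ^ q.2) := by
    refine Summable.of_abs ?_
    refine (summable_aux hx hx2 hy hy2).congr (fun q => ?_)
    rw [abs_mul, abs_mul, abs_pow, abs_pow, abs_neg, abs_neg, abs_of_nonneg hx,
      abs_of_nonneg hy, Nat.abs_cast]
  rw [Summable.tsum_prod hsum]
  have inner : ∀ r : ℕ,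
      (∑' k : ℕ, (((r + k).choose k : ℕ) : ℝ) * (-x) ^ r * (-y) ^ k)
        = (1 / (1 + y)) * ((-x) / (1 + y)) ^ r := by
    intro r
    have hterm : ∀ k : ℕ, (((r + k).choose k : ℕ) : ℝ) * (-x) ^ r * (-y) ^ k
        = (-x) ^ r * ((((k + r).choose r : ℕ) : ℝ) * (-y) ^ k) := by
      intro k
      rw [choose_swap]
      ring
    rw [tsum_congr hterm, tsum_mul_left,
      tsum_choose_mul_geometric_of_norm_lt_one r (by
        rw [Real.norm_eq_abs, abs_neg, abs_of_nonneg hy]; linarith),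
      sub_neg_eq_add]
    have hne : (1:ℝ) + y ≠ 0 := ne_of_gt h1y
    rw [div_pow, pow_succ, one_div, one_div, mul_inv, div_eq_mul_inv]
    ring
  rw [tsum_congr inner, tsum_mul_left,
    tsum_geometric_of_norm_lt_one (by
      rw [norm_div, Real.norm_eq_abs, Real.norm_eq_abs, abs_neg, abs_of_nonneg hx,
        abs_of_pos h1y, div_lt_one h1y]; linarith)]
  have hne : (1:ℝ) + y ≠ 0 := ne_of_gt h1y
  have hne2 : (1:ℝ) + x + y ≠ 0 := ne_of_gt h1xy
  have h3 : 1 - (-x)/(1+y) = (1+x+y)/(1+y) := by field_simp; ring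
  rw [h3, one_div, inv_div]
  field_simp

private lemma half_lt {c e R : ℝ} (hc : 0 < c) (he : 0 < e) (hR1 : 1 ≤ R)
    (hR : (2 * c + 1) ^ e⁻¹ ≤ R) : 2 * (c * (1 / R) ^ e) < 1 := by
  have hR0 : (0:ℝ) < R := lt_of_lt_of_le one_pos hR1
  have h1 : 2 * c + 1 ≤ R ^ e := by
    have h2 : ((2 * c + 1) ^ e⁻¹) ^ e ≤ R ^ e :=
      Real.rpow_le_rpow (Real.rpow_nonneg (by linarith) _) hR he.le
    rwa [Real.rpow_inv_rpow (by linarith) he.ne'] at h2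
  have hRe : (0:ℝ) < R ^ e := Real.rpow_pos_of_pos hR0 _
  rw [one_div, Real.inv_rpow hR0.le]
  have h3 : 2 * (c * (R ^ e)⁻¹) = (2 * c) / R ^ e := by ring
  rw [h3, div_lt_one hRe]
  linarith

private lemma rpow_div_gamma_le {K t e : ℝ} (hK : 0 < K) (ht : 0 < t) (he : 0 ≤ e) :
    t ^ e / Real.Gamma (e + 1) ≤ Real.exp (K * t) * (1 / K) ^ e := by
  have hG : 0 < Real.Gamma (e + 1) := Real.Gamma_pos_of_pos (by linarith)
  have hlb := gamma_lb (mul_pos hK ht) he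
  rw [div_le_iff₀ hG]
  have h1 : (1 / K : ℝ) ^ e * (K * t) ^ e = t ^ e := by
    rw [← Real.mul_rpow (by positivity) (by positivity),
      show (1 / K) * (K * t) = t by field_simp]
  have h2 : Real.exp (K * t) * Real.exp (-(K * t)) = 1 := by
    rw [← Real.exp_add]; simp
  have key : Real.exp (K * t) * (1 / K) ^ e * ((K * t) ^ e * Real.exp (-(K * t))) = t ^ e := by
    calc Real.exp (K * t) * (1 / K) ^ e * ((K * t) ^ e * Real.exp (-(K * t)))
        = ((1 / K) ^ e * (K * t) ^ e) * (Real.exp (K * t) * Real.exp (-(K * t))) := by ring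
      _ = t ^ e := by rw [h1, h2, mul_one]
  calc t ^ e = Real.exp (K * t) * (1 / K) ^ e * ((K * t) ^ e * Real.exp (-(K * t))) := key.symm
    _ ≤ Real.exp (K * t) * (1 / K) ^ e * Real.Gamma (e + 1) := by
        refine mul_le_mul_of_nonneg_left hlb (by positivity)

theorem series_of_prabhakar_laplace_transform
    (α β a b : ℝ) (hαβ : β < α) (hβ : 0 < β) (ha : 0 < a) (hb : 0 < b) :
    ∃ P : ℝ, ∀ p : ℝ, P < p →
      ∫ t in Ioi (0 : ℝ),
          Real.exp (-p * t) *
            ∑' r : ℕ, (-a) ^ r * t ^ ((α - β) * r) *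
              ∑' k : ℕ, (ascPochhammer ℝ k).eval ((r : ℝ) + 1) * (-(b * t ^ α)) ^ k /
                (k.factorial * Real.Gamma ((α - β) * r + 1 + k * α))
        = p ^ (α - 1) / (p ^ α + a * p ^ β + b) := by
  have hab : 0 < α - β := sub_pos.mpr hαβ
  have hα : 0 < α := hβ.trans hαβ
  set K : ℝ := max 1 (max ((2 * a + 1) ^ (α - β)⁻¹) ((2 * b + 1) ^ α⁻¹)) with hKdef
  have hK1 : (1:ℝ) ≤ K := le_max_left _ _
  have hK0 : (0:ℝ) < K := lt_of_lt_of_le one_pos hK1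
  have hKa : (2 * a + 1) ^ (α - β)⁻¹ ≤ K := le_trans (le_max_left _ _) (le_max_right _ _)
  have hKb : (2 * b + 1) ^ α⁻¹ ≤ K := le_trans (le_max_right _ _) (le_max_right _ _)
  have hq1 : 2 * (a * (1 / K) ^ (α - β)) < 1 := half_lt ha hab hK1 hKa
  have hq2 : 2 * (b * (1 / K) ^ α) < 1 := half_lt hb hα hK1 hKb
  have hq1n : 0 ≤ a * (1 / K) ^ (α - β) := by positivity
  have hq2n : 0 ≤ b * (1 / K) ^ α := by positivity
  refine ⟨K, fun p hp => ?_⟩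
  have hp1 : 1 < p := lt_of_le_of_lt hK1 hp
  have hp0 : 0 < p := by linarith
  have hp' : (0:ℝ) < 1 / p := by positivity
  have hxp : 2 * (a * (1 / p) ^ (α - β)) < 1 := half_lt ha hab hp1.le (hKa.trans hp.le)
  have hyp : 2 * (b * (1 / p) ^ α) < 1 := half_lt hb hα hp1.le (hKb.trans hp.le)
  have hxpn : 0 ≤ a * (1 / p) ^ (α - β) := by positivity
  have hypn : 0 ≤ b * (1 / p) ^ α := by positivity
  set g : ℕ × ℕ → ℝ → ℝ := fun q t =>
    Real.exp (-p * t) * ((-a) ^ q.1 * t ^ ((α - β) * q.1) *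
      ((((q.1 + q.2).choose q.2 : ℕ) : ℝ) * (-b) ^ q.2 * t ^ (α * q.2) /
        Real.Gamma ((α - β) * q.1 + 1 + q.2 * α))) with hgdef
  set c : ℕ × ℕ → ℝ := fun q =>
    (-a) ^ q.1 * ((((q.1 + q.2).choose q.2 : ℕ) : ℝ) * (-b) ^ q.2) /
      Real.Gamma ((α - β) * q.1 + α * q.2 + 1) with hcdef
  have hE0 : ∀ q : ℕ × ℕ, 0 ≤ (α - β) * (q.1:ℝ) + α * (q.2:ℝ) := fun q =>
    add_nonneg (mul_nonneg hab.le (Nat.cast_nonneg _)) (mul_nonneg hα.le (Nat.cast_nonneg _))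
  have hEarg : ∀ q : ℕ × ℕ, (α - β) * (q.1:ℝ) + 1 + (q.2:ℝ) * α
      = (α - β) * (q.1:ℝ) + α * (q.2:ℝ) + 1 := fun q => by ring
  have hG : ∀ q : ℕ × ℕ, 0 < Real.Gamma ((α - β) * (q.1:ℝ) + α * (q.2:ℝ) + 1) := fun q =>
    Real.Gamma_pos_of_pos (by linarith [hE0 q])
  have hsplit : ∀ u : ℝ, 0 < u → ∀ r k : ℕ,
      u ^ ((α - β) * (r:ℝ) + α * (k:ℝ)) = (u ^ (α - β)) ^ r * (u ^ α) ^ k := by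
    intro u hu r k
    rw [Real.rpow_add hu, Real.rpow_mul hu.le, Real.rpow_mul hu.le,
      Real.rpow_natCast, Real.rpow_natCast]
  have hgc : ∀ q : ℕ × ℕ, EqOn (g q)
      (fun t => c q * (Real.exp (-p * t) * t ^ ((α - β) * (q.1:ℝ) + α * (q.2:ℝ)))) (Ioi 0) := by
    intro q t ht
    have ht0 : (0:ℝ) < t := ht
    simp only [hgdef, hcdef]
    rw [Real.rpow_add ht0, hEarg q]
    ring
  have hcabs : ∀ q : ℕ × ℕ, |c q| =
      (((q.1 + q.2).choose q.2 : ℕ) : ℝ) * a ^ q.1 * b ^ q.2 /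
        Real.Gamma ((α - β) * (q.1:ℝ) + α * (q.2:ℝ) + 1) := by
    intro q
    simp only [hcdef]
    rw [abs_div, abs_mul, abs_mul, abs_pow, abs_pow, abs_neg, abs_neg,
      abs_of_pos ha, abs_of_pos hb, Nat.abs_cast, abs_of_pos (hG q)]
    ring
  have hI : ∀ q : ℕ × ℕ, IntegrableOn (g q) (Ioi (0:ℝ)) := by
    intro q
    have h : IntegrableOn
        (fun t => c q * (Real.exp (-p * t) * t ^ ((α - β) * (q.1:ℝ) + α * (q.2:ℝ))))
        (Ioi (0:ℝ)) := (laplace_integrable (hE0 q) hp0).const_mul (c q)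
    exact h.congr_fun (hgc q).symm measurableSet_Ioi
  have hIval : ∀ q : ℕ × ℕ, (∫ t in Ioi (0:ℝ), g q t)
      = c q * (Real.Gamma ((α - β) * (q.1:ℝ) + α * (q.2:ℝ) + 1) *
          (1 / p) ^ ((α - β) * (q.1:ℝ) + α * (q.2:ℝ) + 1)) := by
    intro q
    rw [setIntegral_congr_fun measurableSet_Ioi (hgc q), integral_const_mul,
      laplace_val (hE0 q) hp0]
  have hNval : ∀ q : ℕ × ℕ, (∫ t in Ioi (0:ℝ), ‖g q t‖)
      = |c q| * (Real.Gamma ((α - β) * (q.1:ℝ) + α * (q.2:ℝ) + 1) *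
          (1 / p) ^ ((α - β) * (q.1:ℝ) + α * (q.2:ℝ) + 1)) := by
    intro q
    have heq : EqOn (fun t => ‖g q t‖)
        (fun t => |c q| * (Real.exp (-p * t) * t ^ ((α - β) * (q.1:ℝ) + α * (q.2:ℝ)))) (Ioi 0) := by
      intro t ht
      have ht0 : (0:ℝ) < t := ht
      simp only [Real.norm_eq_abs]
      rw [hgc q ht, abs_mul, abs_of_nonneg
        (mul_nonneg (Real.exp_pos _).le (Real.rpow_nonneg ht0.le _))]
    rw [setIntegral_congr_fun measurableSet_Ioi heq, integral_const_mul,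
      laplace_val (hE0 q) hp0]
  have hEp1 : ∀ q : ℕ × ℕ, (1 / p : ℝ) ^ ((α - β) * (q.1:ℝ) + α * (q.2:ℝ) + 1)
      = ((1 / p) ^ (α - β)) ^ q.1 * ((1 / p) ^ α) ^ q.2 * (1 / p) := by
    intro q
    rw [Real.rpow_add hp', Real.rpow_one, hsplit (1 / p) hp' q.1 q.2]
  have hNsum : Summable (fun q : ℕ × ℕ => ∫ t in Ioi (0:ℝ), ‖g q t‖) := by
    have base : Summable (fun q : ℕ × ℕ =>
        (((q.1 + q.2).choose q.2 : ℕ) : ℝ) * (a * (1 / p) ^ (α - β)) ^ q.1 *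
          (b * (1 / p) ^ α) ^ q.2) := summable_aux hxpn hxp hypn hyp
    refine (base.mul_left (1 / p)).congr (fun q => ?_)
    rw [hNval q, hcabs q, hEp1 q, mul_pow, mul_pow]
    field_simp [(hG q).ne']
  have hIval2 : ∀ q : ℕ × ℕ, (∫ t in Ioi (0:ℝ), g q t)
      = (1 / p) * ((((q.1 + q.2).choose q.2 : ℕ) : ℝ) * (-(a * (1 / p) ^ (α - β))) ^ q.1 *
          (-(b * (1 / p) ^ α)) ^ q.2) := by
    intro q
    rw [hIval q, hEp1 q]
    simp only [hcdef]
    have h1 : (-(a * (1 / p) ^ (α - β))) ^ q.1 = (-a) ^ q.1 * ((1 / p) ^ (α - β)) ^ q.1 := by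
      rw [show -(a * (1 / p) ^ (α - β)) = (-a) * ((1 / p) ^ (α - β)) by ring, mul_pow]
    have h2 : (-(b * (1 / p) ^ α)) ^ q.2 = (-b) ^ q.2 * ((1 / p) ^ α) ^ q.2 := by
      rw [show -(b * (1 / p) ^ α) = (-b) * ((1 / p) ^ α) by ring, mul_pow]
    rw [h1, h2]
    field_simp [(hG q).ne']
  have hsum_t : ∀ t : ℝ, 0 < t → Summable (fun q : ℕ × ℕ => g q t) := by
    intro t ht
    refine Summable.of_abs ?_
    have base : Summable (fun q : ℕ × ℕ =>
        (((q.1 + q.2).choose q.2 : ℕ) : ℝ) * (a * (1 / K) ^ (α - β)) ^ q.1 *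
          (b * (1 / K) ^ α) ^ q.2) := summable_aux hq1n hq1 hq2n hq2
    refine (base.mul_left (Real.exp (-p * t) * Real.exp (K * t))).of_nonneg_of_le
      (fun q => abs_nonneg _) (fun q => ?_)
    have habs : |g q t| = |c q| * (Real.exp (-p * t) * t ^ ((α - β) * (q.1:ℝ) + α * (q.2:ℝ))) := by
      rw [hgc q ht, abs_mul, abs_of_nonneg
        (mul_nonneg (Real.exp_pos _).le (Real.rpow_nonneg ht.le _))]
    rw [habs, hcabs q]
    have hgb := rpow_div_gamma_le hK0 ht (hE0 q)
    have hCn : (0:ℝ) ≤ (((q.1 + q.2).choose q.2 : ℕ) : ℝ) * a ^ q.1 * b ^ q.2 :=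
      mul_nonneg (mul_nonneg (Nat.cast_nonneg _) (pow_nonneg ha.le _)) (pow_nonneg hb.le _)
    calc (((q.1 + q.2).choose q.2 : ℕ) : ℝ) * a ^ q.1 * b ^ q.2 /
            Real.Gamma ((α - β) * (q.1:ℝ) + α * (q.2:ℝ) + 1) *
          (Real.exp (-p * t) * t ^ ((α - β) * (q.1:ℝ) + α * (q.2:ℝ)))
        = ((((q.1 + q.2).choose q.2 : ℕ) : ℝ) * a ^ q.1 * b ^ q.2) * Real.exp (-p * t) *
            (t ^ ((α - β) * (q.1:ℝ) + α * (q.2:ℝ)) /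
              Real.Gamma ((α - β) * (q.1:ℝ) + α * (q.2:ℝ) + 1)) := by ring
      _ ≤ ((((q.1 + q.2).choose q.2 : ℕ) : ℝ) * a ^ q.1 * b ^ q.2) * Real.exp (-p * t) *
            (Real.exp (K * t) * (1 / K) ^ ((α - β) * (q.1:ℝ) + α * (q.2:ℝ))) := by
          refine mul_le_mul_of_nonneg_left hgb ?_
          exact mul_nonneg hCn (Real.exp_pos _).le
      _ = Real.exp (-p * t) * Real.exp (K * t) *
            ((((q.1 + q.2).choose q.2 : ℕ) : ℝ) * (a * (1 / K) ^ (α - β)) ^ q.1 *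
              (b * (1 / K) ^ α) ^ q.2) := by
          rw [hsplit (1 / K) (by positivity) q.1 q.2, mul_pow, mul_pow]
          ring
  have step1 : EqOn
      (fun t : ℝ => Real.exp (-p * t) *
        ∑' r : ℕ, (-a) ^ r * t ^ ((α - β) * r) *
          ∑' k : ℕ, (ascPochhammer ℝ k).eval ((r : ℝ) + 1) * (-(b * t ^ α)) ^ k /
            (k.factorial * Real.Gamma ((α - β) * r + 1 + k * α)))
      (fun t => ∑' q : ℕ × ℕ, g q t) (Ioi 0) := by
    intro t ht
    have ht0 : (0:ℝ) < t := ht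
    have hterm : ∀ r k : ℕ,
        (ascPochhammer ℝ k).eval ((r : ℝ) + 1) * (-(b * t ^ α)) ^ k /
            ((k.factorial : ℝ) * Real.Gamma ((α - β) * r + 1 + k * α))
        = (((r + k).choose k : ℕ) : ℝ) * (-b) ^ k * t ^ (α * k) /
            Real.Gamma ((α - β) * r + 1 + k * α) := by
      intro r k
      have hposh : (ascPochhammer ℝ k).eval ((r:ℝ) + 1)
          = (k.factorial : ℝ) * (((r + k).choose k : ℕ) : ℝ) := by
        have h1 : ((r:ℝ) + 1) = ((r + 1 : ℕ) : ℝ) := by push_cast; ring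
        rw [h1, ← ascPochhammer_eval_cast, ascPochhammer_nat_eq_ascFactorial,
          Nat.ascFactorial_eq_factorial_mul_choose]
        push_cast; ring
      have hbt : (-(b * t ^ α)) ^ k = (-b) ^ k * t ^ (α * k) := by
        rw [show -(b * t ^ α) = (-b) * t ^ α by ring, mul_pow,
          ← Real.rpow_natCast (t ^ α) k, ← Real.rpow_mul ht0.le]
      have hGq : 0 < Real.Gamma ((α - β) * r + 1 + k * α) := by
        apply Real.Gamma_pos_of_pos
        have h1 : (0:ℝ) ≤ (α - β) * r := mul_nonneg hab.le (Nat.cast_nonneg _)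
        have h2 : (0:ℝ) ≤ (k:ℝ) * α := mul_nonneg (Nat.cast_nonneg _) hα.le
        linarith
      have hkf : (k.factorial : ℝ) ≠ 0 := Nat.cast_ne_zero.mpr k.factorial_ne_zero
      rw [hposh, hbt]
      field_simp
    dsimp only
    calc Real.exp (-p * t) *
        ∑' r : ℕ, (-a) ^ r * t ^ ((α - β) * r) *
          ∑' k : ℕ, (ascPochhammer ℝ k).eval ((r : ℝ) + 1) * (-(b * t ^ α)) ^ k /
            (k.factorial * Real.Gamma ((α - β) * r + 1 + k * α))
        = Real.exp (-p * t) *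
          ∑' r : ℕ, ∑' k : ℕ, (-a) ^ r * t ^ ((α - β) * r) *
            ((((r + k).choose k : ℕ) : ℝ) * (-b) ^ k * t ^ (α * k) /
              Real.Gamma ((α - β) * r + 1 + k * α)) := by
          congr 1
          refine tsum_congr (fun r => ?_)
          rw [tsum_congr (hterm r)]
          exact tsum_mul_left.symm
      _ = ∑' r : ℕ, ∑' k : ℕ, Real.exp (-p * t) * ((-a) ^ r * t ^ ((α - β) * r) *
            ((((r + k).choose k : ℕ) : ℝ) * (-b) ^ k * t ^ (α * k) /
              Real.Gamma ((α - β) * r + 1 + k * α))) := by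
          rw [← tsum_mul_left]
          exact tsum_congr (fun r => tsum_mul_left.symm)
      _ = ∑' q : ℕ × ℕ, g q t := (Summable.tsum_prod (hsum_t t ht0)).symm
  rw [setIntegral_congr_fun measurableSet_Ioi step1,
    ← integral_tsum_of_summable_integral_norm hI hNsum,
    tsum_congr hIval2, tsum_mul_left, tsum_eval hxpn hxp hypn hyp]
  -- final algebra
  have hpα : (0:ℝ) < p ^ α := Real.rpow_pos_of_pos hp0 _
  have hA : p ^ α * (a * (1 / p) ^ (α - β)) = a * p ^ β := by
    rw [one_div, Real.inv_rpow hp0.le, ← Real.rpow_neg hp0.le]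
    calc p ^ α * (a * p ^ (-(α - β))) = a * (p ^ α * p ^ (-(α - β))) := by ring
      _ = a * p ^ β := by rw [← Real.rpow_add hp0]; congr 1; ring
  have hB : p ^ α * (b * (1 / p) ^ α) = b := by
    rw [one_div, Real.inv_rpow hp0.le, ← Real.rpow_neg hp0.le]
    calc p ^ α * (b * p ^ (-α)) = b * (p ^ α * p ^ (-α)) := by ring
      _ = b := by rw [← Real.rpow_add hp0, add_neg_cancel, Real.rpow_zero, mul_one]
  have hC : p ^ (α - 1) = p ^ α * (1 / p) := by
    rw [show α - 1 = α + (-1) by ring, Real.rpow_add hp0, Real.rpow_neg_one, one_div]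
  have hD : p ^ α + a * p ^ β + b
      = p ^ α * (1 + a * (1 / p) ^ (α - β) + b * (1 / p) ^ α) := by
    rw [mul_add, mul_add, mul_one, hA, hB]
  rw [hC, hD, mul_div_mul_left _ _ (ne_of_gt hpα)]
  ring
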